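/- Let D be a division ring with center F and L a maximal subfield of D (i.e., the centralizer of L in D equals L). If there exists a nontrivial field automorphism σ of L such that x⁻¹σ(x) ∈ F for every nonzero x ∈ L, then D is commutative. -/
import Mathlib


/-- Let `D` be a division ring with center `F` and `L` a maximal subfield of `D`
(i.e. the centralizer of `L` in `D` equals `L`). If there is a nontrivial automorphism
`σ` of `L` with `x⁻¹ * σ x ∈ F` for all nonzero `x ∈ L`, then `D` is commutative. -/
theorem stmt1 {D : Type*} [DivisionRing D] (L : Subfield D)
    (hcomm : ∀ x ∈ L, ∀ y ∈ L, x * y = y * x)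
    (hmax : ∀ d : D, (∀ x ∈ L, d * x = x * d) → d ∈ L)
    (σ : L ≃+* L) (hσ : ∃ x : L, σ x ≠ x)
    (h : ∀ x : L, x ≠ 0 → ((x⁻¹ * σ x : L) : D) ∈ Subring.center D) :
    ∀ a b : D, a * b = b * a := by
  -- inverses of central elements are central
  have hinv : ∀ u : D, u ∈ Subring.center D → u⁻¹ ∈ Subring.center D := by
    intro u hu
    rcases eq_or_ne u 0 with rfl | h0
    · simpa using hu
    rw [Subring.mem_center_iff] at hu ⊢
    intro g
    have h1 : u⁻¹ * (g * u) * u⁻¹ = u⁻¹ * (u * g) * u⁻¹ := by rw [hu g]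
    calc g * u⁻¹ = u⁻¹ * (u * g) * u⁻¹ := by
          rw [← mul_assoc, mul_assoc u⁻¹ u g, ← mul_assoc, inv_mul_cancel₀ h0, one_mul]
      _ = u⁻¹ * (g * u) * u⁻¹ := h1.symm
      _ = u⁻¹ * g := by
          rw [mul_assoc, mul_assoc, mul_inv_cancel₀ h0, mul_one]
  -- key step: any x moved by σ is central
  have key1 : ∀ x : L, σ x ≠ x → (x : D) ∈ Subring.center D := by
    intro x hne
    have hx0 : x ≠ 0 := by
      rintro rfl; exact hne (by simp)
    set c : L := x⁻¹ * σ x with hc_def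
    have hc : (c : D) ∈ Subring.center D := h x hx0
    have hxc : σ x = x * c := (mul_inv_cancel_left₀ hx0 (σ x)).symm
    have hc1 : c ≠ 1 := by
      intro h1; exact hne (by rw [hxc, h1, mul_one])
    have hy0 : x + 1 ≠ 0 := by
      intro h1
      have hx : x = -1 := eq_neg_of_add_eq_zero_left h1
      have hs1 : σ (-1 : L) = -1 := by rw [σ.map_neg, σ.map_one]
      exact hne (by rw [hx, hs1])
    set d : L := (x + 1)⁻¹ * σ (x + 1) with hd_def
    have hd : (d : D) ∈ Subring.center D := h (x + 1) hy0
    have hyd : σ (x + 1) = (x + 1) * d := (mul_inv_cancel_left₀ hy0 (σ (x+1))).symm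
    have heq : x * (c - d) = d - 1 := by
      have h2 : σ (x + 1) = x * c + 1 := by rw [σ.map_add, σ.map_one, hxc]
      rw [add_mul, one_mul] at hyd
      have h3 : x * d + d = x * c + 1 := hyd.symm.trans h2
      have h4 : x * c = x * d + d - 1 := by rw [h3]; abel
      rw [mul_sub, h4]; abel
    have hcd : c ≠ d := by
      intro hcd
      have h5 : d - 1 = 0 := by rw [← heq, hcd, sub_self, mul_zero]
      exact hc1 (hcd.trans (sub_eq_zero.mp h5))
    have hcd0 : c - d ≠ 0 := sub_ne_zero.mpr hcd
    have hx_eq : x = (d - 1) * (c - d)⁻¹ :=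
      (eq_mul_inv_iff_mul_eq₀ hcd0).mpr heq
    have hx_eqD : (x : D) = ((d : D) - 1) * ((c : D) - (d : D))⁻¹ := by
      have h6 := congrArg (fun z : L => (z : D)) hx_eq
      push_cast at h6
      exact h6
    rw [hx_eqD]
    exact Subring.mul_mem _ (Subring.sub_mem _ hd (Subring.one_mem _))
      (hinv _ (Subring.sub_mem _ hc hd))
  -- every element of L is central
  have key2 : ∀ x : L, (x : D) ∈ Subring.center D := by
    obtain ⟨a, ha⟩ := hσ
    intro x
    by_cases hxs : σ x = x
    · by_cases hxa : x + a = 0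
      · have hx : x = -a := eq_neg_of_add_eq_zero_left hxa
        rw [hx]
        push_cast
        exact Subring.neg_mem _ (key1 a ha)
      · have h1 : σ (x + a) ≠ x + a := by
          rw [σ.map_add, hxs]
          intro hh
          exact ha (add_left_cancel hh)
        have h2 := key1 (x + a) h1
        have h3 := key1 a ha
        have : (x : D) = ((x + a : L) : D) - (a : D) := by
          push_cast; rw [add_sub_cancel_right]
        rw [this]
        exact Subring.sub_mem _ h2 h3
    · exact key1 x hxs
  -- conclude
  have hall : ∀ dd : D, dd ∈ Subring.center D := by
    intro dd
    have hdL : dd ∈ L := by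
      apply hmax
      intro x hx
      exact Subring.mem_center_iff.mp (key2 ⟨x, hx⟩) dd
    exact key2 ⟨dd, hdL⟩
  intro a b
  exact Subring.mem_center_iff.mp (hall b) a
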